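/- Assume the Schinzel–Tijdeman conjecture: for every polynomial P with rational coefficients having at least three simple roots (in an algebraic closure), the equation y² z³ = P(x) has only finitely many solutions in integers x, y, z with y z ≠ 0. Then the set W of powerful numbers contains no infinite Hilbert cube: there do not exist a non-negative integer a₀ and an infinite sequence a₁, a₂, a₃, … of positive integers such that a₀ + Σ_{i∈F} a_i is powerful for every finite nonempty set F of indices. -/

import Mathlib

open Polynomial in
lemma rm_three {K : Type*} [Field K] [DecidableEq K] (u v w r : K) :
    Polynomial.rootMultiplicity r
      ((Polynomial.X - Polynomial.C u) * (Polynomial.X - Polynomial.C v) *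
        (Polynomial.X - Polynomial.C w)) =
      (if r = u then 1 else 0) + (if r = v then 1 else 0) + (if r = w then 1 else 0) := by
  rw [Polynomial.rootMultiplicity_mul (mul_ne_zero (mul_ne_zero
      (Polynomial.X_sub_C_ne_zero u) (Polynomial.X_sub_C_ne_zero v))
      (Polynomial.X_sub_C_ne_zero w)),
    Polynomial.rootMultiplicity_mul (mul_ne_zero (Polynomial.X_sub_C_ne_zero u)
      (Polynomial.X_sub_C_ne_zero v)),
    Polynomial.rootMultiplicity_X_sub_C, Polynomial.rootMultiplicity_X_sub_C,
    Polynomial.rootMultiplicity_X_sub_C]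


/-- A positive integer is powerful if every prime dividing it does so at
least to the second power. -/
def Powerful (n : ℕ) : Prop := 0 < n ∧ ∀ p : ℕ, p.Prime → p ∣ n → p ^ 2 ∣ n

lemma powerful_mul {m n : ℕ} (hm : Powerful m) (hn : Powerful n) : Powerful (m * n) := by
  refine ⟨Nat.mul_pos hm.1 hn.1, fun p hp hdvd => ?_⟩
  rcases (Nat.Prime.dvd_mul hp).mp hdvd with h | h
  · exact (hm.2 p hp h).mul_right n
  · exact (hn.2 p hp h).mul_left m

lemma powerful_rep (n : ℕ) (hn : Powerful n) :
    ∃ y z : ℕ, 0 < y ∧ 0 < z ∧ n = y ^ 2 * z ^ 3 := by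
  induction n using Nat.strong_induction_on with
  | _ n ih =>
    obtain ⟨hpos, hdvd⟩ := hn
    rcases eq_or_lt_of_le (show 1 ≤ n from hpos) with h1 | h1
    · exact ⟨1, 1, one_pos, one_pos, by omega⟩
    · set p := n.minFac with hpdef
      have hp : p.Prime := Nat.minFac_prime (by omega)
      have hn0 : n ≠ 0 := by omega
      set e := n.factorization p with hedef
      have hpe : p ^ e ∣ n := Nat.ordProj_dvd n p
      have he2 : 2 ≤ e := by
        have h2 : p ^ 2 ∣ n := hdvd p hp (Nat.minFac_dvd n)
        exact (Nat.Prime.pow_dvd_iff_le_factorization hp hn0).mp h2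
      set m := n / p ^ e with hmdef
      have hnm : n = p ^ e * m := (Nat.ordProj_mul_ordCompl_eq_self n p).symm
      have hpm : ¬ p ∣ m := Nat.not_dvd_ordCompl hp hn0
      have hmpos : 0 < m := Nat.ordCompl_pos p hn0
      have hmlt : m < n := by
        have hpe4 : 4 ≤ p ^ e := by
          calc 4 = 2 ^ 2 := by norm_num
          _ ≤ p ^ 2 := Nat.pow_le_pow_left hp.two_le 2
          _ ≤ p ^ e := Nat.pow_le_pow_right hp.pos he2
        nlinarith [hnm]
      have hmpow : Powerful m := by
        refine ⟨hmpos, fun q hq hqm => ?_⟩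
        have hqn : q ∣ n := hqm.trans (Dvd.intro_left _ hnm.symm)
        have hq2 : q ^ 2 ∣ n := hdvd q hq hqn
        have hqp : q ≠ p := fun h => hpm (h ▸ hqm)
        have hcop : Nat.Coprime (q ^ 2) (p ^ e) :=
          Nat.Coprime.pow _ _ ((Nat.coprime_primes hq hp).mpr hqp)
        exact hcop.dvd_of_dvd_mul_left (hnm ▸ hq2)
      obtain ⟨y, z, hy, hz, hyz⟩ := ih m hmlt hmpow
      rcases Nat.even_or_odd e with he | he
      · obtain ⟨t, ht⟩ := he
        refine ⟨p ^ t * y, z, Nat.mul_pos (pow_pos hp.pos _) hy, hz, ?_⟩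
        rw [hnm, hyz, ht]; ring
      · obtain ⟨t, ht⟩ := he
        have ht3 : e = 2 * (t - 1) + 3 := by omega
        refine ⟨p ^ (t - 1) * y, p * z, Nat.mul_pos (pow_pos hp.pos _) hy, Nat.mul_pos hp.pos hz, ?_⟩
        rw [hnm, hyz, ht3]; ring

open Polynomial in
/-- Assuming the Schinzel–Tijdeman conjecture, there is no infinite Hilbert
cube in the set of powerful numbers. -/
theorem stmt_12
    (ST : ∀ P : Polynomial ℚ,
      (∃ r₁ r₂ r₃ : AlgebraicClosure ℚ, r₁ ≠ r₂ ∧ r₁ ≠ r₃ ∧ r₂ ≠ r₃ ∧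
        (P.map (algebraMap ℚ (AlgebraicClosure ℚ))).rootMultiplicity r₁ = 1 ∧
        (P.map (algebraMap ℚ (AlgebraicClosure ℚ))).rootMultiplicity r₂ = 1 ∧
        (P.map (algebraMap ℚ (AlgebraicClosure ℚ))).rootMultiplicity r₃ = 1) →
      {s : ℤ × ℤ × ℤ | s.2.1 * s.2.2 ≠ 0 ∧
        ((s.2.1 : ℚ)) ^ 2 * ((s.2.2 : ℚ)) ^ 3 = P.eval ((s.1 : ℤ) : ℚ)}.Finite) :
    ¬ ∃ (a₀ : ℕ) (a : ℕ → ℕ), (∀ i, 0 < a i) ∧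
      ∀ F : Finset ℕ, F.Nonempty → Powerful (a₀ + ∑ i ∈ F, a i) := by
  classical
  rintro ⟨a₀, a, hapos, hF⟩
  set b1 := a 0 with hb1
  set b2 := a 0 + a 1 with hb2
  set b3 := a 0 + a 1 + a 2 with hb3
  have hb12 : b1 < b2 := by have := hapos 1; omega
  have hb23 : b2 < b3 := by have := hapos 2; omega
  -- the x values
  set x : ℕ → ℕ := fun k => a₀ + ∑ i ∈ Finset.Icc 3 (k + 3), a i with hx
  have hxmono : StrictMono x := by
    apply strictMono_nat_of_lt_succ
    intro k
    have hicc : Finset.Icc 3 (k + 1 + 3) = insert (k + 4) (Finset.Icc 3 (k + 3)) := by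
      ext i
      simp only [Finset.mem_Icc, Finset.mem_insert]
      omega
    have hnotmem : (k + 4) ∉ Finset.Icc 3 (k + 3) := by
      simp only [Finset.mem_Icc]; omega
    simp only [hx, hicc, Finset.sum_insert hnotmem]
    have := hapos (k + 4)
    omega
  -- powerfulness of x k + b j
  have key : ∀ k, Powerful (x k + b1) ∧ Powerful (x k + b2) ∧ Powerful (x k + b3) := by
    intro k
    have h0 : (0 : ℕ) ∉ Finset.Icc 3 (k + 3) := by simp
    have h1 : (1 : ℕ) ∉ Finset.Icc 3 (k + 3) := by simp
    have h2 : (2 : ℕ) ∉ Finset.Icc 3 (k + 3) := by simp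
    refine ⟨?_, ?_, ?_⟩
    · have := hF (insert 0 (Finset.Icc 3 (k + 3))) (Finset.insert_nonempty _ _)
      rw [Finset.sum_insert h0] at this
      have heq : x k + b1 = a₀ + (a 0 + ∑ i ∈ Finset.Icc 3 (k + 3), a i) := by
        simp only [hx, hb1]; omega
      rwa [heq]
    · have := hF (insert 0 (insert 1 (Finset.Icc 3 (k + 3)))) (Finset.insert_nonempty _ _)
      rw [Finset.sum_insert (by simp [h0]), Finset.sum_insert h1] at this
      have heq : x k + b2 = a₀ + (a 0 + (a 1 + ∑ i ∈ Finset.Icc 3 (k + 3), a i)) := by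
        simp only [hx, hb2]; omega
      rwa [heq]
    · have := hF (insert 0 (insert 1 (insert 2 (Finset.Icc 3 (k + 3))))) (Finset.insert_nonempty _ _)
      rw [Finset.sum_insert (by simp [h0]), Finset.sum_insert (by simp [h1]),
        Finset.sum_insert h2] at this
      have heq : x k + b3 = a₀ + (a 0 + (a 1 + (a 2 + ∑ i ∈ Finset.Icc 3 (k + 3), a i))) := by
        simp only [hx, hb3]; omega
      rwa [heq]
  have hrep : ∀ k, ∃ y z : ℕ, 0 < y ∧ 0 < z ∧
      (x k + b1) * (x k + b2) * (x k + b3) = y ^ 2 * z ^ 3 := by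
    intro k
    obtain ⟨h1, h2, h3⟩ := key k
    exact powerful_rep _ (powerful_mul (powerful_mul h1 h2) h3)
  choose Y Z hY hZ hEq using hrep
  -- the polynomial
  set P : Polynomial ℚ :=
    (X - C (-(b1 : ℚ))) * (X - C (-(b2 : ℚ))) * (X - C (-(b3 : ℚ))) with hP
  have hfin := ST P ?_
  · -- derive a contradiction: the solution set is infinite
    apply hfin.not_infinite
    refine Set.infinite_of_injective_forall_mem
      (f := fun k : ℕ => (((x k : ℤ), (Y k : ℤ), (Z k : ℤ)) : ℤ × ℤ × ℤ)) ?_ ?_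
    · intro k l hkl
      have : (x k : ℤ) = (x l : ℤ) := congrArg Prod.fst hkl
      exact hxmono.injective (by exact_mod_cast this)
    · intro k
      refine ⟨?_, ?_⟩
      · have := hY k; have := hZ k
        simp only [ne_eq, mul_eq_zero]
        omega
      · show ((Y k : ℤ) : ℚ) ^ 2 * ((Z k : ℤ) : ℚ) ^ 3 = P.eval (((x k : ℤ) : ℤ) : ℚ)
        have heval : P.eval (((x k : ℕ) : ℚ)) =
            ((x k + b1 : ℕ) : ℚ) * ((x k + b2 : ℕ) : ℚ) * ((x k + b3 : ℕ) : ℚ) := by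
          simp only [hP, eval_mul, eval_sub, eval_X, eval_C]
          push_cast
          ring
        have := hEq k
        push_cast
        rw [heval]
        exact_mod_cast this.symm
  · -- three simple roots
    set f := algebraMap ℚ (AlgebraicClosure ℚ) with hf
    have hfi : Function.Injective f := f.injective
    have n12 : b1 ≠ b2 := hb12.ne
    have n13 : b1 ≠ b3 := by omega
    have n23 : b2 ≠ b3 := hb23.ne
    refine ⟨f (-(b1 : ℚ)), f (-(b2 : ℚ)), f (-(b3 : ℚ)), ?_, ?_, ?_, ?_, ?_, ?_⟩
    · intro h; apply hfi at h; have : (b1 : ℚ) = b2 := by linarith [neg_injective h]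
      exact absurd (by exact_mod_cast this) hb12.ne
    · intro h; apply hfi at h; have : (b1 : ℚ) = b3 := by linarith [neg_injective h]
      exact absurd (by exact_mod_cast this) (by omega : b1 ≠ b3)
    · intro h; apply hfi at h; have : (b2 : ℚ) = b3 := by linarith [neg_injective h]
      exact absurd (by exact_mod_cast this) hb23.ne
    all_goals {
      have hmap : P.map f = (X - C (f (-(b1 : ℚ)))) * (X - C (f (-(b2 : ℚ)))) *
          (X - C (f (-(b3 : ℚ)))) := by
        simp [hP, Polynomial.map_mul, Polynomial.map_sub]
      rw [hmap, rm_three]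
      have e12 : f (-(b1:ℚ)) ≠ f (-(b2:ℚ)) := fun h => by
        have := hfi h; have : (b1 : ℚ) = b2 := by linarith [neg_injective this]
        exact absurd (by exact_mod_cast this) hb12.ne
      have e13 : f (-(b1:ℚ)) ≠ f (-(b3:ℚ)) := fun h => by
        have := hfi h; have : (b1 : ℚ) = b3 := by linarith [neg_injective this]
        exact absurd (by exact_mod_cast this) (by omega : b1 ≠ b3)
      have e23 : f (-(b2:ℚ)) ≠ f (-(b3:ℚ)) := fun h => by
        have := hfi h; have : (b2 : ℚ) = b3 := by linarith [neg_injective this]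
        exact absurd (by exact_mod_cast this) hb23.ne
      simp [e12, e13, e23, e12.symm, e13.symm, e23.symm,
        n12, n13, n23, n12.symm, n13.symm, n23.symm]
    }
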